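/- Suppose A is an (n+1)×(n+1) orthogonal matrix with first column (1/√(n+1))·𝟙_{n+1}, written in block form with first row (1/√(n+1), a, u) (u a row vector of length n-1) and remaining rows ((1/√(n+1))𝟙_n, v^T, X) where v is a row vector of length n and X is n×(n-1), and suppose a ≠ -√(n/(n+1)). Then the n×n matrix Ã = ( (1/√n)𝟙_n | X + (√(n/(n+1)) + a)^{-1}·(-v^T + (1/√(n(n+1)))𝟙_n)·u ) is orthogonal. -/

import Mathlib

open Real Matrix

lemma stmt9_key (c d e s a vi vj Sxx Si Sj Su δ : ℝ)
    (hxx : c^2 + vi*vj + Sxx = δ)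
    (hi : c^2 + a*vi + Si = 0)
    (hj : c^2 + a*vj + Sj = 0)
    (hu : c^2 + a^2 + Su = 1)
    (he : e*s = c^2) (hs : s^2 = 1 - c^2) (hd : d^2 = c^2 + e^2)
    (hP : s + a ≠ 0) :
    d^2 + (Sxx + (s+a)⁻¹ * (-vj + e) * Si + (s+a)⁻¹*(-vi+e)*Sj
      + ((s+a)⁻¹)^2 * ((-vi+e)*(-vj+e))*Su) = δ := by
  have h1 : Sxx = δ - c^2 - vi*vj := by linarith
  have h2 : Si = -(c^2 + a*vi) := by linarith
  have h3 : Sj = -(c^2 + a*vj) := by linarith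
  have h4 : Su = 1 - c^2 - a^2 := by linarith
  have hc : c^2 = e*s := he.symm
  have hd' : d^2 = e*s + e^2 := by rw [hd, hc]
  have hs' : s^2 = 1 - e*s := by rw [hs, hc]
  set L := (s+a)⁻¹ with hLdef
  have hL : L * (s+a) = 1 := inv_mul_cancel₀ hP
  subst h1 h2 h3 h4
  rw [hc, hd']
  linear_combination (-((-vi+e) + (-vj+e))*e + (-vi+e)*(-vj+e)*(1+L*(s-a))) * hL
    - (-vi+e)*(-vj+e)*L^2 * hs'

/-- Reduction construction: from an (n+1)×(n+1) orthogonal matrix A (here n = m+1) with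
first column (1/√(n+1))𝟙 and blocks a, u, v, X with a ≠ -√(n/(n+1)), the n×n matrix
Ã = ( (1/√n)𝟙 | X + (√(n/(n+1)) + a)⁻¹(-vᵀ + (1/√(n(n+1)))𝟙)u ) is orthogonal. -/
theorem stmt9 (m : ℕ) (A : Matrix (Fin (m + 2)) (Fin (m + 2)) ℝ)
    (hA : A ∈ Matrix.orthogonalGroup (Fin (m + 2)) ℝ)
    (hcol : ∀ i, A i 0 = 1 / Real.sqrt (m + 2))
    (a : ℝ) (u : Fin m → ℝ) (v : Fin (m + 1) → ℝ)
    (X : Matrix (Fin (m + 1)) (Fin m) ℝ)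
    (ha : a = A 0 1) (hu : ∀ j : Fin m, u j = A 0 ⟨j.1 + 2, by omega⟩)
    (hv : ∀ i : Fin (m + 1), v i = A i.succ 1)
    (hX : ∀ (i : Fin (m + 1)) (j : Fin m), X i j = A i.succ ⟨j.1 + 2, by omega⟩)
    (hane : a ≠ -Real.sqrt ((m + 1) / (m + 2)))
    (At : Matrix (Fin (m + 1)) (Fin (m + 1)) ℝ)
    (hAt0 : ∀ i, At i 0 = 1 / Real.sqrt (m + 1))
    (hAt : ∀ (i : Fin (m + 1)) (j : Fin m),
      At i j.succ = X i j +
        (Real.sqrt ((m + 1) / (m + 2)) + a)⁻¹ *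
          ((-v i + 1 / Real.sqrt ((m + 1) * (m + 2))) * u j)) :
    At ∈ Matrix.orthogonalGroup (Fin (m + 1)) ℝ := by
  have hm2 : (0:ℝ) < (m:ℝ) + 2 := by positivity
  have hm1 : (0:ℝ) < (m:ℝ) + 1 := by positivity
  set c : ℝ := 1 / Real.sqrt ((m:ℝ) + 2) with hcdef
  set d : ℝ := 1 / Real.sqrt ((m:ℝ) + 1) with hddef
  set e : ℝ := 1 / Real.sqrt (((m:ℝ) + 1) * ((m:ℝ) + 2)) with hedef
  set s : ℝ := Real.sqrt (((m:ℝ) + 1) / ((m:ℝ) + 2)) with hsdef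
  have hc2 : c^2 = 1/((m:ℝ)+2) := by
    rw [hcdef, div_pow, one_pow, Real.sq_sqrt hm2.le]
  have hd2 : d^2 = 1/((m:ℝ)+1) := by
    rw [hddef, div_pow, one_pow, Real.sq_sqrt hm1.le]
  have he2 : e^2 = 1/(((m:ℝ)+1)*((m:ℝ)+2)) := by
    rw [hedef, div_pow, one_pow, Real.sq_sqrt (by positivity)]
  have hs2 : s^2 = ((m:ℝ)+1)/((m:ℝ)+2) := Real.sq_sqrt (by positivity)
  have hs' : s^2 = 1 - c^2 := by rw [hs2, hc2]; field_simp; ring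
  have hd' : d^2 = c^2 + e^2 := by rw [hd2, hc2, he2]; field_simp; ring
  have he' : e*s = c^2 := by
    have h1 : (0:ℝ) ≤ e*s := by
      apply mul_nonneg
      · rw [hedef]; positivity
      · exact Real.sqrt_nonneg _
    have h2 : (e*s)^2 = (c^2)^2 := by
      rw [mul_pow, he2, hs2, hc2]; field_simp
    calc e*s = Real.sqrt ((e*s)^2) := (Real.sqrt_sq h1).symm
      _ = Real.sqrt ((c^2)^2) := by rw [h2]
      _ = c^2 := Real.sqrt_sq (by positivity)
  have hP : s + a ≠ 0 := by
    intro h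
    exact hane (by linarith)
  -- row orthonormality of A
  rw [Matrix.mem_orthogonalGroup_iff] at hA
  have hrow : ∀ p q, (∑ k, A p k * A q k) = if p = q then 1 else 0 := by
    intro p q
    have h : (A * Aᵀ) p q = (1 : Matrix (Fin (m+2)) (Fin (m+2)) ℝ) p q := by rw [hA]
    simpa [Matrix.mul_apply, Matrix.one_apply] using h
  have hsplit : ∀ f : Fin (m+2) → ℝ,
      ∑ k, f k = f 0 + f 1 + ∑ k : Fin m, f ⟨k.1+2, by omega⟩ := by
    intro f
    rw [Fin.sum_univ_succ, Fin.sum_univ_succ]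
    have h0 : ((0 : Fin (m+1)).succ : Fin (m+2)) = 1 := rfl
    have h2 : ∀ k : Fin m, (k.succ.succ : Fin (m+2)) = ⟨k.1+2, by omega⟩ := by
      intro k; rfl
    simp only [h0, h2]
    ring
  rw [Matrix.mem_orthogonalGroup_iff]
  ext i j
  simp only [Matrix.mul_apply, Matrix.one_apply, Matrix.star_apply, star_trivial]
  rw [Fin.sum_univ_succ]
  have hAt0i := hAt0 i
  have hAt0j := hAt0 j
  -- key sums
  have key := stmt9_key c d e s a (v i) (v j)
    (∑ k, X i k * X j k) (∑ k, u k * X i k) (∑ k, u k * X j k) (∑ k, u k * u k)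
    (if i = j then 1 else 0)
    ?_ ?_ ?_ ?_ he' hs' hd' hP
  · -- assemble
    have expand : ∀ k : Fin m, At i k.succ * At j k.succ =
        X i k * X j k + (s+a)⁻¹ * (-v j + e) * (u k * X i k)
          + (s+a)⁻¹ * (-v i + e) * (u k * X j k)
          + ((s+a)⁻¹)^2 * ((-v i + e)*(-v j + e)) * (u k * u k) := by
      intro k
      rw [hAt i k, hAt j k]
      ring
    calc At i 0 * At j 0 + ∑ k : Fin m, At i k.succ * At j k.succ
        = d^2 + ((∑ k, X i k * X j k) + (s+a)⁻¹ * (-v j + e) * (∑ k, u k * X i k)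
            + (s+a)⁻¹*(-v i+e)*(∑ k, u k * X j k)
            + ((s+a)⁻¹)^2 * ((-v i+e)*(-v j+e))*(∑ k, u k * u k)) := by
          rw [hAt0i, hAt0j]
          congr 1
          · rw [hddef]; ring
          · rw [Finset.sum_congr rfl (fun k _ => expand k)]
            rw [Finset.sum_add_distrib, Finset.sum_add_distrib, Finset.sum_add_distrib,
              ← Finset.mul_sum, ← Finset.mul_sum, ← Finset.mul_sum]
      _ = if i = j then 1 else 0 := key
  · -- hxx
    have h := hrow i.succ j.succ
    rw [hsplit] at h
    rw [hcol, hcol, ← hv i, ← hv j] at h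
    have hXX : ∀ k : Fin m, A i.succ ⟨k.1+2, by omega⟩ * A j.succ ⟨k.1+2, by omega⟩
        = X i k * X j k := by intro k; rw [hX i k, hX j k]
    rw [Finset.sum_congr rfl (fun k _ => hXX k)] at h
    have hcc : c * c = c^2 := (sq c).symm
    rw [hcc] at h
    simp only [Fin.succ_inj] at h
    linarith [h]
  · -- hi : c^2 + a * v i + ∑ u k * X i k = 0
    have h := hrow 0 i.succ
    rw [hsplit] at h
    rw [hcol, hcol, ← hv i, ← ha] at h
    have hXX : ∀ k : Fin m, A 0 ⟨k.1+2, by omega⟩ * A i.succ ⟨k.1+2, by omega⟩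
        = u k * X i k := by intro k; rw [hu k, hX i k]
    rw [Finset.sum_congr rfl (fun k _ => hXX k)] at h
    rw [if_neg (Ne.symm (Fin.succ_ne_zero i))] at h
    have hcc : c * c = c^2 := (sq c).symm
    rw [hcc] at h
    linarith [h]
  · -- hj
    have h := hrow 0 j.succ
    rw [hsplit] at h
    rw [hcol, hcol, ← hv j, ← ha] at h
    have hXX : ∀ k : Fin m, A 0 ⟨k.1+2, by omega⟩ * A j.succ ⟨k.1+2, by omega⟩
        = u k * X j k := by intro k; rw [hu k, hX j k]
    rw [Finset.sum_congr rfl (fun k _ => hXX k)] at h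
    rw [if_neg (Ne.symm (Fin.succ_ne_zero j))] at h
    have hcc : c * c = c^2 := (sq c).symm
    rw [hcc] at h
    linarith [h]
  · -- hu : c^2 + a^2 + ∑ u k * u k = 1
    have h := hrow 0 0
    rw [hsplit] at h
    rw [hcol, ← ha] at h
    have hXX : ∀ k : Fin m, A 0 ⟨k.1+2, by omega⟩ * A 0 ⟨k.1+2, by omega⟩
        = u k * u k := by intro k; rw [hu k]
    rw [Finset.sum_congr rfl (fun k _ => hXX k)] at h
    rw [if_pos rfl] at h
    have hcc : c * c = c^2 := (sq c).symm
    have haa : a * a = a^2 := (sq a).symm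
    rw [hcc, haa] at h
    linarith [h]
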